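/- Let G be a signed complete graph on V and H its mirrored double (mirror copy V', positive edges (u,u'), cross and mirror edges inheriting signs from G). The minimum number of disagreements over clusterings of H in which every cluster has equally many vertices from V and from V' equals 4 times the minimum number of disagreements over unconstrained clusterings of G. -/

import Mathlib

open Finset

/-- An edge `{u,v}` is a disagreement of clustering `c`: negative inside a cluster,
or positive between clusters. `sign u v = true` means positive. -/
def isDis {V : Type*} (sign : V → V → Bool) (c : V → ℕ) (u v : V) : Bool :=
  if c u = c v then !(sign u v) else sign u v

/-- Number of disagreements of a clustering (unordered edges). -/
def numDis {V : Type*} [Fintype V] [DecidableEq V] (sign : V → V → Bool) (c : V → ℕ) : ℕ :=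
  ((Finset.univ : Finset (V × V)).filter
    (fun p => p.1 ≠ p.2 ∧ isDis sign c p.1 p.2 = true)).card / 2

/-- Weight of a matched pair `(u,v)`: number of vertices `w ≠ u,v` on which the
signs to `u` and `v` differ, plus `1` if `(u,v)` is negative. -/
def pairW {V : Type*} [Fintype V] [DecidableEq V] (sign : V → V → Bool) (u v : V) : ℕ :=
  ((Finset.univ : Finset V).filter
    (fun w => w ≠ u ∧ w ≠ v ∧ sign u w ≠ sign v w)).card
  + (if sign u v = false then 1 else 0)

/-- The mirrored double of a signed graph on `V ⊕ V`: `inl` is the original copy,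
`inr` the mirror copy; `(u, u')` edges are positive, all others inherit signs. -/
def mirrorSign {V : Type*} [DecidableEq V] (sign : V → V → Bool) : V ⊕ V → V ⊕ V → Bool
  | Sum.inl u, Sum.inl v => sign u v
  | Sum.inr u, Sum.inr v => sign u v
  | Sum.inl u, Sum.inr v => if u = v then true else sign u v
  | Sum.inr u, Sum.inl v => if u = v then true else sign u v

/-! ### Auxiliary machinery -/

lemma mirror_ll {V : Type*} [DecidableEq V] (sg : V → V → Bool) (u v : V) :
    mirrorSign sg (Sum.inl u) (Sum.inl v) = sg u v := rfl

lemma mirror_rr {V : Type*} [DecidableEq V] (sg : V → V → Bool) (u v : V) :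
    mirrorSign sg (Sum.inr u) (Sum.inr v) = sg u v := rfl

lemma mirror_lr {V : Type*} [DecidableEq V] (sg : V → V → Bool) (u v : V) :
    mirrorSign sg (Sum.inl u) (Sum.inr v) = if u = v then true else sg u v := rfl

lemma mirror_rl {V : Type*} [DecidableEq V] (sg : V → V → Bool) (u v : V) :
    mirrorSign sg (Sum.inr u) (Sum.inl v) = if u = v then true else sg u v := rfl

/-- Ordered disagreement indicator. -/
def dd {W : Type*} [DecidableEq W] (sg : W → W → Bool) (c : W → ℕ) (u v : W) : ℕ :=
  if u ≠ v ∧ isDis sg c u v = true then 1 else 0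

/-- Ordered disagreement count. -/
def Nord {W : Type*} [Fintype W] [DecidableEq W] (sg : W → W → Bool) (c : W → ℕ) : ℕ :=
  ∑ u : W, ∑ v : W, dd sg c u v

lemma Nord_eq_card {W : Type*} [Fintype W] [DecidableEq W] (sg : W → W → Bool) (c : W → ℕ) :
    Nord sg c = ((Finset.univ : Finset (W × W)).filter
      (fun p => p.1 ≠ p.2 ∧ isDis sg c p.1 p.2 = true)).card := by
  rw [Finset.card_filter, Fintype.sum_prod_type]
  rfl

lemma numDis_eq {W : Type*} [Fintype W] [DecidableEq W] (sg : W → W → Bool) (c : W → ℕ) :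
    numDis sg c = Nord sg c / 2 := by
  rw [numDis, Nord_eq_card]

lemma even_card_swap {α : Type*} [DecidableEq α] :
    ∀ s : Finset (α × α), (∀ p ∈ s, Prod.swap p ∈ s) → (∀ p ∈ s, p.1 ≠ p.2) →
      Even s.card := by
  intro s
  induction s using Finset.strongInduction with
  | _ s ih =>
    intro hclosed hne
    rcases s.eq_empty_or_nonempty with rfl | ⟨p, hp⟩
    · simp
    · have hsp : Prod.swap p ∈ s := hclosed p hp
      have hpp : Prod.swap p ≠ p := by
        intro h
        exact hne p hp ((Prod.ext_iff.mp h).1.symm)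
      have hspe : Prod.swap p ∈ s.erase p := Finset.mem_erase.mpr ⟨hpp, hsp⟩
      set s' := (s.erase p).erase (Prod.swap p) with hs'
      have hsub : s' ⊆ s := (Finset.erase_subset _ _).trans (Finset.erase_subset _ _)
      have hps' : p ∉ s' := by
        intro h
        exact (Finset.mem_erase.mp (Finset.mem_erase.mp h).2).1 rfl
      have hss : s' ⊂ s := Finset.ssubset_iff_of_subset hsub |>.mpr ⟨p, hp, hps'⟩
      have h2 : 1 < s.card := Finset.one_lt_card.mpr ⟨p, hp, Prod.swap p, hsp, hpp.symm⟩
      have hcard : s.card = s'.card + 2 := by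
        rw [hs', Finset.card_erase_of_mem hspe, Finset.card_erase_of_mem hp]
        omega
      have hclosed' : ∀ q ∈ s', Prod.swap q ∈ s' := by
        intro q hq
        have hq1 := Finset.mem_erase.mp hq
        have hq2 := Finset.mem_erase.mp hq1.2
        refine Finset.mem_erase.mpr ⟨?_, Finset.mem_erase.mpr ⟨?_, hclosed q hq2.2⟩⟩
        · intro h
          exact hq2.1 (by simpa using congrArg Prod.swap h)
        · intro h
          exact hq1.1 (by simpa using congrArg Prod.swap h)
      have hne' : ∀ q ∈ s', q.1 ≠ q.2 := fun q hq => hne q (hsub hq)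
      obtain ⟨m, hm⟩ := ih s' hss hclosed' hne'
      exact ⟨m + 1, by omega⟩

lemma isDis_symm {W : Type*} (sg : W → W → Bool) (hsym : ∀ u v, sg u v = sg v u)
    (c : W → ℕ) (u v : W) : isDis sg c u v = isDis sg c v u := by
  have hc : (c u = c v) = (c v = c u) := propext eq_comm
  simp only [isDis, hsym u v, hc]

lemma Nord_even {W : Type*} [Fintype W] [DecidableEq W] (sg : W → W → Bool)
    (hsym : ∀ u v, sg u v = sg v u) (c : W → ℕ) : Even (Nord sg c) := by
  rw [Nord_eq_card]
  apply even_card_swap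
  · intro p hp
    rw [Finset.mem_filter] at hp ⊢
    refine ⟨Finset.mem_univ _, ?_, ?_⟩
    · exact fun h => hp.2.1 h.symm
    · rw [Prod.fst_swap, Prod.snd_swap, ← isDis_symm sg hsym]
      exact hp.2.2
  · intro p hp
    exact (Finset.mem_filter.mp hp).2.1

lemma dd_mirror_ll {V : Type*} [Fintype V] [DecidableEq V] (sg : V → V → Bool)
    (c : V → ℕ) (u v : V) :
    dd (mirrorSign sg) (Sum.elim c c) (Sum.inl u) (Sum.inl v) = dd sg c u v := by
  simp [dd, isDis, mirror_ll]
  split_ifs <;> simp_all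

lemma dd_mirror_rr {V : Type*} [Fintype V] [DecidableEq V] (sg : V → V → Bool)
    (c : V → ℕ) (u v : V) :
    dd (mirrorSign sg) (Sum.elim c c) (Sum.inr u) (Sum.inr v) = dd sg c u v := by
  simp [dd, isDis, mirror_rr]
  split_ifs <;> simp_all

lemma dd_mirror_lr {V : Type*} [Fintype V] [DecidableEq V] (sg : V → V → Bool)
    (c : V → ℕ) (u v : V) :
    dd (mirrorSign sg) (Sum.elim c c) (Sum.inl u) (Sum.inr v) = dd sg c u v := by
  by_cases h : u = v
  · subst h
    simp [dd, isDis, mirror_lr]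
  · simp [dd, isDis, mirror_lr, h]

lemma dd_mirror_rl {V : Type*} [Fintype V] [DecidableEq V] (sg : V → V → Bool)
    (c : V → ℕ) (u v : V) :
    dd (mirrorSign sg) (Sum.elim c c) (Sum.inr u) (Sum.inl v) = dd sg c u v := by
  by_cases h : u = v
  · subst h
    simp [dd, isDis, mirror_rl]
  · simp [dd, isDis, mirror_rl, h]

lemma Nord_mirror {V : Type*} [Fintype V] [DecidableEq V] (sg : V → V → Bool) (c : V → ℕ) :
    Nord (mirrorSign sg) (Sum.elim c c) = 4 * Nord sg c := by
  unfold Nord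
  rw [Fintype.sum_sum_type]
  have h1 : ∀ u : V, ∑ q : V ⊕ V, dd (mirrorSign sg) (Sum.elim c c) (Sum.inl u) q
      = ∑ v : V, dd sg c u v + ∑ v : V, dd sg c u v := by
    intro u
    rw [Fintype.sum_sum_type]
    congr 1
    · exact Finset.sum_congr rfl fun v _ => dd_mirror_ll sg c u v
    · exact Finset.sum_congr rfl fun v _ => dd_mirror_lr sg c u v
  have h2 : ∀ u : V, ∑ q : V ⊕ V, dd (mirrorSign sg) (Sum.elim c c) (Sum.inr u) q
      = ∑ v : V, dd sg c u v + ∑ v : V, dd sg c u v := by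
    intro u
    rw [Fintype.sum_sum_type]
    congr 1
    · exact Finset.sum_congr rfl fun v _ => dd_mirror_rl sg c u v
    · exact Finset.sum_congr rfl fun v _ => dd_mirror_rr sg c u v
  rw [Finset.sum_congr rfl fun u _ => h1 u, Finset.sum_congr rfl fun u _ => h2 u]
  simp only [Finset.sum_add_distrib]
  ring

/-- hybrid clustering picked by a boolean choice per vertex. -/
def hyb {V : Type*} (c : V ⊕ V → ℕ) (t : V → Bool) : V → ℕ :=
  fun w => if t w then c (Sum.inr w) else c (Sum.inl w)

lemma fiber_card_eq {V : Type*} [Fintype V] [DecidableEq V] {u v : V} (huv : u ≠ v)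
    (b1 b2 b1' b2' : Bool) :
    ((Finset.univ : Finset (V → Bool)).filter fun t => (t u, t v) = (b1, b2)).card
      = ((Finset.univ : Finset (V → Bool)).filter fun t => (t u, t v) = (b1', b2')).card := by
  refine Finset.card_bij' (fun t _ => Function.update (Function.update t u b1') v b2')
    (fun t _ => Function.update (Function.update t u b1) v b2) ?_ ?_ ?_ ?_
  · intro t _
    simp [Function.update_apply, huv]
  · intro t _
    simp [Function.update_apply, huv]
  · intro t ht
    simp only [Finset.mem_filter, Finset.mem_univ, true_and] at ht
    injection ht with h1 h2
    funext w
    rcases eq_or_ne w v with rfl | hv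
    · simp [Function.update_apply, h2]
    · rcases eq_or_ne w u with rfl | hu
      · simp [Function.update_apply, hv, h1]
      · simp [Function.update_apply, hv, hu]
  · intro t ht
    simp only [Finset.mem_filter, Finset.mem_univ, true_and] at ht
    injection ht with h1 h2
    funext w
    rcases eq_or_ne w v with rfl | hv
    · simp [Function.update_apply, h2]
    · rcases eq_or_ne w u with rfl | hu
      · simp [Function.update_apply, hv, h1]
      · simp [Function.update_apply, hv, hu]

lemma sum_eval_pair {V : Type*} [Fintype V] [DecidableEq V] {u v : V} (huv : u ≠ v)
    (f : Bool → Bool → ℕ) :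
    4 * ∑ t : V → Bool, f (t u) (t v)
      = (Finset.univ : Finset (V → Bool)).card
        * (f false false + f false true + f true false + f true true) := by
  classical
  set c0 := ((Finset.univ : Finset (V → Bool)).filter
    fun t => (t u, t v) = (false, false)).card with hc0
  have hfib : ∀ b : Bool × Bool,
      ((Finset.univ : Finset (V → Bool)).filter fun t => (t u, t v) = b).card = c0 := by
    rintro ⟨b1, b2⟩
    exact fiber_card_eq huv b1 b2 false false
  have hsum : ∑ t : V → Bool, f (t u) (t v)
      = ∑ b : Bool × Bool, c0 * f b.1 b.2 := by
    rw [← Finset.sum_fiberwise_of_maps_to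
      (fun (t : V → Bool) _ => Finset.mem_univ ((t u, t v))) (fun t => f (t u) (t v))]
    refine Finset.sum_congr rfl ?_
    rintro ⟨b1, b2⟩ _
    rw [← hfib (b1, b2)]
    apply Finset.sum_const_nat
    intro t ht
    simp only [Finset.mem_filter, Finset.mem_univ, true_and] at ht
    injection ht with h1 h2
    rw [h1, h2]
  have hcardT : (Finset.univ : Finset (V → Bool)).card = ∑ b : Bool × Bool, c0 := by
    rw [Finset.card_eq_sum_card_fiberwise
      (fun (t : V → Bool) _ => Finset.mem_univ ((t u, t v)))]
    exact Finset.sum_congr rfl fun b _ => hfib b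
  rw [hsum, hcardT]
  simp only [Fintype.sum_prod_type, Fintype.sum_bool]
  ring

lemma key_le {V : Type*} [Fintype V] [DecidableEq V] (sg : V → V → Bool) (c : V ⊕ V → ℕ) :
    4 * ∑ t : V → Bool, Nord sg (hyb c t)
      ≤ (Finset.univ : Finset (V → Bool)).card * Nord (mirrorSign sg) c := by
  classical
  have hR : Nord (mirrorSign sg) c = ∑ u : V, ∑ v : V,
      (dd (mirrorSign sg) c (Sum.inl u) (Sum.inl v)
        + dd (mirrorSign sg) c (Sum.inl u) (Sum.inr v)
        + dd (mirrorSign sg) c (Sum.inr u) (Sum.inl v)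
        + dd (mirrorSign sg) c (Sum.inr u) (Sum.inr v)) := by
    unfold Nord
    rw [Fintype.sum_sum_type]
    have e1 : ∀ u : V, ∑ q : V ⊕ V, dd (mirrorSign sg) c (Sum.inl u) q
        = ∑ v : V, dd (mirrorSign sg) c (Sum.inl u) (Sum.inl v)
          + ∑ v : V, dd (mirrorSign sg) c (Sum.inl u) (Sum.inr v) :=
      fun u => Fintype.sum_sum_type _
    have e2 : ∀ u : V, ∑ q : V ⊕ V, dd (mirrorSign sg) c (Sum.inr u) q
        = ∑ v : V, dd (mirrorSign sg) c (Sum.inr u) (Sum.inl v)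
          + ∑ v : V, dd (mirrorSign sg) c (Sum.inr u) (Sum.inr v) :=
      fun u => Fintype.sum_sum_type _
    rw [Finset.sum_congr rfl fun u _ => e1 u, Finset.sum_congr rfl fun u _ => e2 u]
    simp only [Finset.sum_add_distrib]
    ring
  have hL : 4 * ∑ t : V → Bool, Nord sg (hyb c t)
      = ∑ u : V, ∑ v : V, (4 * ∑ t : V → Bool, dd sg (hyb c t) u v) := by
    unfold Nord
    rw [Finset.sum_comm, Finset.mul_sum]
    refine Finset.sum_congr rfl fun u _ => ?_
    rw [Finset.sum_comm, Finset.mul_sum]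
  rw [hL, hR, Finset.mul_sum]
  refine Finset.sum_le_sum fun u _ => ?_
  rw [Finset.mul_sum]
  refine Finset.sum_le_sum fun v _ => ?_
  by_cases huv : u = v
  · subst huv
    have hz : ∀ t : V → Bool, dd sg (hyb c t) u u = 0 := fun t => by simp [dd]
    rw [Finset.sum_congr rfl fun t _ => hz t]
    simp
  · set f : Bool → Bool → ℕ := fun b1 b2 =>
      if u ≠ v ∧ (if (if b1 then c (Sum.inr u) else c (Sum.inl u))
          = (if b2 then c (Sum.inr v) else c (Sum.inl v))
        then !(sg u v) else sg u v) = true then 1 else 0 with hf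
    have hdd : ∀ t : V → Bool, dd sg (hyb c t) u v = f (t u) (t v) := by
      intro t
      rw [hf]
      rfl
    have hll : f false false = dd (mirrorSign sg) c (Sum.inl u) (Sum.inl v) := by
      rw [hf]
      simp [dd, isDis, mirror_ll, huv]
    have hlr : f false true = dd (mirrorSign sg) c (Sum.inl u) (Sum.inr v) := by
      rw [hf]
      simp [dd, isDis, mirror_lr, huv]
    have hrl : f true false = dd (mirrorSign sg) c (Sum.inr u) (Sum.inl v) := by
      rw [hf]
      simp [dd, isDis, mirror_rl, huv]
    have hrr : f true true = dd (mirrorSign sg) c (Sum.inr u) (Sum.inr v) := by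
      rw [hf]
      simp [dd, isDis, mirror_rr, huv]
    rw [Finset.sum_congr rfl fun t _ => hdd t, sum_eval_pair huv f, hll, hlr, hrl, hrr]

lemma lower_main {V : Type*} [Fintype V] [DecidableEq V] (sg : V → V → Bool)
    (c : V ⊕ V → ℕ) :
    ∃ t : V → Bool, 4 * Nord sg (hyb c t) ≤ Nord (mirrorSign sg) c := by
  by_contra h
  push_neg at h
  have hpos : 0 < (Finset.univ : Finset (V → Bool)).card :=
    Finset.card_pos.mpr ⟨fun _ => false, Finset.mem_univ _⟩
  have hsum : (Finset.univ : Finset (V → Bool)).card * (Nord (mirrorSign sg) c + 1)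
      ≤ ∑ t : V → Bool, 4 * Nord sg (hyb c t) := by
    calc (Finset.univ : Finset (V → Bool)).card * (Nord (mirrorSign sg) c + 1)
        = ∑ _t : V → Bool, (Nord (mirrorSign sg) c + 1) := by
          rw [Finset.sum_const, smul_eq_mul]
      _ ≤ ∑ t : V → Bool, 4 * Nord sg (hyb c t) :=
          Finset.sum_le_sum fun t _ => h t
  have hkey : ∑ t : V → Bool, 4 * Nord sg (hyb c t)
      ≤ (Finset.univ : Finset (V → Bool)).card * Nord (mirrorSign sg) c := by
    rw [← Finset.mul_sum]
    exact key_le sg c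
  have := Nat.le_of_mul_le_mul_left (hsum.trans hkey) hpos
  omega

/-- the minimum number of disagreements over balanced clusterings
of the mirrored double equals 4 times the unconstrained optimum of G. -/
theorem stmt18 {V : Type*} [Fintype V] [DecidableEq V]
    (sign : V → V → Bool) (hsym : ∀ u v, sign u v = sign v u) :
    sInf {n | ∃ c : V ⊕ V → ℕ,
        (∀ k, (univ.filter fun v : V => c (Sum.inl v) = k).card
            = (univ.filter fun v : V => c (Sum.inr v) = k).card) ∧
        numDis (mirrorSign sign) c = n}
      = 4 * sInf {n | ∃ c : V → ℕ, numDis sign c = n} := by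
  classical
  have hAne : {n | ∃ c : V → ℕ, numDis sign c = n}.Nonempty :=
    ⟨numDis sign (fun _ => 0), ⟨fun _ => 0, rfl⟩⟩
  obtain ⟨c₀, hc₀⟩ := Nat.sInf_mem hAne
  have hbal : ∀ k, (univ.filter fun v : V => Sum.elim c₀ c₀ (Sum.inl v) = k).card
      = (univ.filter fun v : V => Sum.elim c₀ c₀ (Sum.inr v) = k).card := by
    intro k
    simp
    congr
  have hmirror : numDis (mirrorSign sign) (Sum.elim c₀ c₀) = 4 * numDis sign c₀ := by
    rw [numDis_eq, numDis_eq, Nord_mirror]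
    obtain ⟨m, hm⟩ := Nord_even sign hsym c₀
    omega
  have hmem : 4 * sInf {n | ∃ c : V → ℕ, numDis sign c = n} ∈
      {n | ∃ c : V ⊕ V → ℕ,
        (∀ k, (univ.filter fun v : V => c (Sum.inl v) = k).card
            = (univ.filter fun v : V => c (Sum.inr v) = k).card) ∧
        numDis (mirrorSign sign) c = n} :=
    ⟨Sum.elim c₀ c₀, hbal, by rw [hmirror, hc₀]⟩
  refine le_antisymm (Nat.sInf_le hmem) (le_csInf ⟨_, hmem⟩ ?_)
  rintro b ⟨c, _, rfl⟩
  obtain ⟨t, ht⟩ := lower_main sign c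
  have h1 : sInf {n | ∃ c : V → ℕ, numDis sign c = n} ≤ numDis sign (hyb c t) :=
    Nat.sInf_le ⟨hyb c t, rfl⟩
  have h2 : numDis sign (hyb c t) = Nord sign (hyb c t) / 2 := numDis_eq _ _
  have h3 : numDis (mirrorSign sign) c = Nord (mirrorSign sign) c / 2 := numDis_eq _ _
  omega
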